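/- Let P be a finite poset with linear extension p_1,...,p_m, A_i ⊆ [n] nonempty, and 𝔄 a poset ideal of Hom(P,A) with |A_1| ≥ 2; let a_1 = min(A_1). Set 𝔄_1 = {f ∈ 𝔄 : f(p_1) = a_1} and 𝔄_2 = {f ∈ 𝔄 : f(p_1) ≠ a_1}, with associated monomial ideals J = L(𝔄_1) and K = L(𝔄_2). Then J ∩ K = X_{p_1,a_1}·K. -/

import Mathlib

open MvPolynomial

noncomputable def Dmap {m n : ℕ} (f : Fin m → Fin n) : Fin m × Fin n →₀ ℕ :=
  ∑ i : Fin m, Finsupp.single (i, f i) 1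

lemma Dmap_apply {m n : ℕ} (f : Fin m → Fin n) (j : Fin m) (b : Fin n) :
    Dmap f (j, b) = if f j = b then 1 else 0 := by
  classical
  rw [Dmap, Finsupp.finset_sum_apply]
  rw [Finset.sum_eq_single j]
  · simp [Finsupp.single_apply, Prod.ext_iff]
  · intro i _ hij
    simp [Finsupp.single_apply, Prod.ext_iff, hij]
  · simp

lemma prodX_eq {m n : ℕ} (K : Type) [Field K] (f : Fin m → Fin n) :
    ∏ i : Fin m, (X (i, f i) : MvPolynomial (Fin m × Fin n) K) = monomial (Dmap f) 1 := by
  classical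
  rw [Dmap]
  induction (Finset.univ : Finset (Fin m)) using Finset.induction with
  | empty => simp
  | insert _ _ h ih =>
    rw [Finset.prod_insert h, Finset.sum_insert h, ih, X, monomial_mul, one_mul]

lemma Dmap_le_iff {m n : ℕ} (f : Fin m → Fin n) (x : Fin m × Fin n →₀ ℕ) :
    Dmap f ≤ x ↔ ∀ j, 1 ≤ x (j, f j) := by
  rw [Finsupp.le_def]
  constructor
  · intro h j
    have := h (j, f j)
    rwa [Dmap_apply, if_pos rfl] at this
  · intro h p
    obtain ⟨j, b⟩ := p
    rw [Dmap_apply]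
    split
    · next hb => subst hb; exact h j
    · exact Nat.zero_le _

lemma span_prodX_eq {m n : ℕ} (K : Type) [Field K] (S : Set (Fin m → Fin n)) :
    Ideal.span ((fun f : Fin m → Fin n =>
        ∏ i : Fin m, (X (i, f i) : MvPolynomial (Fin m × Fin n) K)) '' S) =
    Ideal.span ((fun d => (monomial d (1 : K))) '' (Dmap '' S)) := by
  rw [Set.image_image]
  congr 1
  exact Set.image_congr fun f _ => prodX_eq K f


/-- with `p₁` the first element of the linear extension (index `0`),
`a₁ = min A₁`, `𝔄₁ = {f ∈ 𝔄 : f p₁ = a₁}`, `𝔄₂ = {f ∈ 𝔄 : f p₁ ≠ a₁}`,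
`J = L(𝔄₁)`, `K = L(𝔄₂)`, one has `J ∩ K = X_{p₁,a₁}·K`. -/
theorem stmt3 (K : Type) [Field K] (m n : ℕ) (hm : 0 < m)
    (r : Fin m → Fin m → Prop)
    (hrefl : ∀ i, r i i) (htrans : ∀ i j k, r i j → r j k → r i k)
    (hcompat : ∀ i j, r i j → i ≤ j)
    (A : Fin m → Finset (Fin n)) (hA : ∀ i, (A i).Nonempty)
    (𝔄 : Set (Fin m → Fin n)) (h𝔄ne : 𝔄.Nonempty)
    (hsub : ∀ f ∈ 𝔄, (∀ i, f i ∈ A i) ∧ (∀ i j, r i j → f i ≤ f j))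
    (hdown : ∀ f ∈ 𝔄, ∀ g : Fin m → Fin n, (∀ i, g i ∈ A i) →
      (∀ i j, r i j → g i ≤ g j) → (∀ i, g i ≤ f i) → g ∈ 𝔄)
    (hA1 : 2 ≤ (A ⟨0, hm⟩).card)
    (a1 : Fin n) (ha1 : a1 ∈ A ⟨0, hm⟩) (ha1min : ∀ b ∈ A ⟨0, hm⟩, a1 ≤ b) :
    (Ideal.span ((fun f : Fin m → Fin n =>
        ∏ i : Fin m, (X (i, f i) : MvPolynomial (Fin m × Fin n) K)) ''
          {f ∈ 𝔄 | f ⟨0, hm⟩ = a1})) ⊓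
      (Ideal.span ((fun f : Fin m → Fin n =>
        ∏ i : Fin m, (X (i, f i) : MvPolynomial (Fin m × Fin n) K)) ''
          {f ∈ 𝔄 | f ⟨0, hm⟩ ≠ a1})) =
    Ideal.span {(X ((⟨0, hm⟩ : Fin m), a1) : MvPolynomial (Fin m × Fin n) K)} *
      Ideal.span ((fun f : Fin m → Fin n =>
        ∏ i : Fin m, (X (i, f i) : MvPolynomial (Fin m × Fin n) K)) ''
          {f ∈ 𝔄 | f ⟨0, hm⟩ ≠ a1}) := by
  classical
  set p0 : Fin m := ⟨0, hm⟩ with hp0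
  set e1 : Fin m × Fin n →₀ ℕ := Finsupp.single (p0, a1) 1 with he1
  -- rewrite the RHS as a monomial ideal
  have hR : Ideal.span {(X (p0, a1) : MvPolynomial (Fin m × Fin n) K)} *
      Ideal.span ((fun f : Fin m → Fin n =>
        ∏ i : Fin m, (X (i, f i) : MvPolynomial (Fin m × Fin n) K)) ''
          {f ∈ 𝔄 | f p0 ≠ a1}) =
      Ideal.span ((fun d => (monomial d (1 : K))) ''
        ((fun d => e1 + d) '' (Dmap '' {f ∈ 𝔄 | f p0 ≠ a1}))) := by
    rw [span_prodX_eq, Ideal.span_mul_span', Set.singleton_mul]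
    simp only [Set.image_image]
    congr 1
    apply Set.image_congr
    intro f _
    rw [X, monomial_mul, one_mul]
  rw [hR, span_prodX_eq, span_prodX_eq]
  ext x
  rw [Submodule.mem_inf, mem_ideal_span_monomial_image, mem_ideal_span_monomial_image,
    mem_ideal_span_monomial_image]
  constructor
  · rintro ⟨h1, h2⟩ d hd
    obtain ⟨df, ⟨f, ⟨hf𝔄, hf0⟩, rfl⟩, hfle⟩ := h1 d hd
    obtain ⟨dg, ⟨g, ⟨hg𝔄, hg0⟩, rfl⟩, hgle⟩ := h2 d hd
    refine ⟨e1 + Dmap g, ⟨Dmap g, ⟨g, ⟨hg𝔄, hg0⟩, rfl⟩, rfl⟩, ?_⟩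
    rw [Finsupp.le_def]
    intro p
    rw [Finsupp.add_apply]
    by_cases hp : p = (p0, a1)
    · subst hp
      rw [he1, Finsupp.single_apply, if_pos rfl, Dmap_apply, if_neg hg0]
      have := (Dmap_le_iff f d).mp hfle p0
      rw [hf0] at this
      omega
    · rw [he1, Finsupp.single_apply, if_neg (by exact fun h => hp h.symm)]
      simpa using Finsupp.le_def.mp hgle p
  · intro h
    refine ⟨?_, ?_⟩
    · intro d hd
      obtain ⟨_, ⟨dg, ⟨g, ⟨hg𝔄, hg0⟩, rfl⟩, rfl⟩, hle⟩ := h d hd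
      -- construct f = update g p0 a1
      set f : Fin m → Fin n := Function.update g p0 a1 with hf
      have hgA : ∀ i, g i ∈ A i := (hsub g hg𝔄).1
      have hgmono : ∀ i j, r i j → g i ≤ g j := (hsub g hg𝔄).2
      have hfval : ∀ i, f i = if i = p0 then a1 else g i := by
        intro i
        by_cases hi : i = p0
        · subst hi; simp [hf]
        · rw [if_neg hi, hf, Function.update_of_ne hi]
      have hf𝔄 : f ∈ 𝔄 := by
        apply hdown g hg𝔄 f
        · intro i
          rw [hfval]
          split
          · next hi => subst hi; exact ha1
          · exact hgA i
        · intro i j hij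
          by_cases hj : j = p0
          · subst hj
            have : i = p0 := le_antisymm (hcompat _ _ hij) (by
              rw [hp0]; exact Fin.mk_le_of_le_val (Nat.zero_le _))
            subst this
            exact le_refl _
          · rw [hfval i, hfval j, if_neg hj]
            by_cases hi : i = p0
            · subst hi
              rw [if_pos rfl]
              exact le_trans (ha1min _ (hgA p0)) (hgmono _ _ hij)
            · rw [if_neg hi]
              exact hgmono _ _ hij
        · intro i
          rw [hfval]
          split
          · next hi => subst hi; exact ha1min _ (hgA p0)
          · exact le_refl _
      have hf0 : f p0 = a1 := by rw [hfval, if_pos rfl]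
      refine ⟨Dmap f, ⟨f, ⟨hf𝔄, hf0⟩, rfl⟩, ?_⟩
      rw [Dmap_le_iff]
      intro j
      have hled := Finsupp.le_def.mp hle
      by_cases hj : j = p0
      · subst hj
        have := hled (p0, a1)
        rw [Finsupp.add_apply, he1, Finsupp.single_apply, if_pos rfl] at this
        rw [hf0]
        omega
      · have := hled (j, g j)
        rw [Finsupp.add_apply, Dmap_apply, if_pos rfl] at this
        rw [hfval, if_neg hj]
        omega
    · intro d hd
      obtain ⟨_, ⟨dg, hdg, rfl⟩, hle⟩ := h d hd
      exact ⟨dg, hdg, le_trans (le_add_self) hle⟩
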